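/- Let N ≥ 3 and let a, b, c, d > 0 satisfy the Pohozaev relation ((N−2)/2) a + (N/2) b = (N/2) c + N d. Define φ(τ) = (τ^{N−2}/2) a + (τ^N/2) b − (N τ^{N+α}/(2(N+α))) c − τ^N d for τ ≥ 0, where α ∈ (0, N). Then φ(τ) = (τ^{N−2}/2 − (N−2)τ^N/(2N)) a + (τ^N/2 − N τ^{N+α}/(2(N+α))) c, and φ attains a strict global maximum on [0, ∞) at τ = 1. -/

import Mathlib

open Real

lemma stmt14_key {x θ : ℝ} (hx : 0 ≤ x) (hx1 : x ≠ 1) (h0 : 0 < θ) (h1 : θ < 1) :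
    x ^ θ < θ * x + (1 - θ) := by
  have hs : (-1 : ℝ) ≤ x - 1 := by linarith
  have hs' : x - 1 ≠ 0 := sub_ne_zero.mpr hx1
  have h := rpow_one_add_lt_one_add_mul_self hs hs' h0 h1
  have hx' : 1 + (x - 1) = x := by ring
  rw [hx'] at h
  linarith

theorem stmt_14 (N : ℕ) (hN : 3 ≤ N) (α : ℝ) (hα : 0 < α) (hαN : α < N)
    (a b c d : ℝ) (ha : 0 < a) (hb : 0 < b) (hc : 0 < c) (hd : 0 < d)
    (hpoh : ((N:ℝ) - 2) / 2 * a + (N:ℝ) / 2 * b = (N:ℝ) / 2 * c + (N:ℝ) * d)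
    (φ : ℝ → ℝ)
    (hφ : ∀ τ : ℝ, 0 ≤ τ →
      φ τ = τ ^ ((N:ℝ) - 2) / 2 * a + τ ^ (N:ℝ) / 2 * b
        - (N:ℝ) * τ ^ ((N:ℝ) + α) / (2 * ((N:ℝ) + α)) * c - τ ^ (N:ℝ) * d) :
    (∀ τ : ℝ, 0 ≤ τ →
      φ τ = (τ ^ ((N:ℝ) - 2) / 2 - ((N:ℝ) - 2) * τ ^ (N:ℝ) / (2 * N)) * a
        + (τ ^ (N:ℝ) / 2 - (N:ℝ) * τ ^ ((N:ℝ) + α) / (2 * ((N:ℝ) + α))) * c) ∧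
    (∀ τ : ℝ, 0 ≤ τ → τ ≠ 1 → φ τ < φ 1) := by
  have hN3 : (3:ℝ) ≤ (N:ℝ) := by exact_mod_cast hN
  have hN0 : (N:ℝ) ≠ 0 := by positivity
  have hNα : (0:ℝ) < (N:ℝ) + α := by linarith
  have hb' : b = c + 2*d - ((N:ℝ)-2)/(N:ℝ)*a := by
    field_simp
    linarith [hpoh]
  have hform : ∀ τ : ℝ, 0 ≤ τ →
      φ τ = (τ ^ ((N:ℝ) - 2) / 2 - ((N:ℝ) - 2) * τ ^ (N:ℝ) / (2 * N)) * a
        + (τ ^ (N:ℝ) / 2 - (N:ℝ) * τ ^ ((N:ℝ) + α) / (2 * ((N:ℝ) + α))) * c := by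
    intro τ hτ
    rw [hφ τ hτ, hb']
    field_simp
    ring
  refine ⟨hform, ?_⟩
  intro τ hτ hτ1
  have h1 : φ 1 = (1/2 - ((N:ℝ)-2)/(2*N)) * a + (1/2 - (N:ℝ)/(2*((N:ℝ)+α))) * c := by
    rw [hform 1 zero_le_one]
    simp
  have hfa : (0:ℝ) < 1/2 - ((N:ℝ)-2)/(2*N) := by
    rw [sub_pos, div_lt_div_iff₀ (by positivity) (by norm_num)]
    linarith
  have hgc : (0:ℝ) < 1/2 - (N:ℝ)/(2*((N:ℝ)+α)) := by
    rw [sub_pos, div_lt_div_iff₀ (by positivity) (by norm_num)]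
    linarith
  rcases eq_or_lt_of_le hτ with rfl | hτpos
  · -- τ = 0
    have e1 : (0:ℝ) ^ ((N:ℝ) - 2) = 0 := Real.zero_rpow (by linarith)
    have e2 : (0:ℝ) ^ ((N:ℝ)) = 0 := Real.zero_rpow (by linarith)
    have e3 : (0:ℝ) ^ ((N:ℝ) + α) = 0 := Real.zero_rpow (by positivity)
    rw [hform 0 le_rfl, e1, e2, e3, h1]
    norm_num
    nlinarith [mul_pos hfa ha, mul_pos hgc hc]
  · -- τ > 0
    have hτN : (0:ℝ) < τ ^ ((N:ℝ)) := Real.rpow_pos_of_pos hτpos _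
    have hτNα : (0:ℝ) < τ ^ ((N:ℝ) + α) := Real.rpow_pos_of_pos hτpos _
    have hxne : τ ^ ((N:ℝ)) ≠ 1 := by
      intro h
      apply hτ1
      refine Real.rpow_left_injOn hN0 hτ (by norm_num : (1:ℝ) ∈ {y : ℝ | 0 ≤ y}) ?_
      simpa using h
    have hyne : τ ^ ((N:ℝ) + α) ≠ 1 := by
      intro h
      apply hτ1
      refine Real.rpow_left_injOn (ne_of_gt hNα) hτ (by norm_num : (1:ℝ) ∈ {y : ℝ | 0 ≤ y}) ?_
      simpa using h
    have hNpos : (0:ℝ) < (N:ℝ) := by linarith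
    -- AM-GM 1:  τ^(N-2) < ((N-2)/N) * τ^N + 2/N
    have key1 : τ ^ ((N:ℝ) - 2) < ((N:ℝ)-2)/(N:ℝ) * τ ^ ((N:ℝ)) + (1 - ((N:ℝ)-2)/(N:ℝ)) := by
      have hθ0 : (0:ℝ) < ((N:ℝ)-2)/(N:ℝ) := by
        apply div_pos <;> linarith
      have hθ1 : ((N:ℝ)-2)/(N:ℝ) < 1 := by
        rw [div_lt_one (by linarith)]; linarith
      have h := stmt14_key hτN.le hxne hθ0 hθ1
      have heq : (τ ^ ((N:ℝ))) ^ (((N:ℝ)-2)/(N:ℝ)) = τ ^ ((N:ℝ) - 2) := by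
        rw [← Real.rpow_mul hτ]
        congr 1
        field_simp
      rwa [heq] at h
    have key1' : (N:ℝ) * τ ^ ((N:ℝ) - 2) < ((N:ℝ)-2) * τ ^ ((N:ℝ)) + 2 := by
      have h := mul_lt_mul_of_pos_left key1 hNpos
      have e : (N:ℝ) * (((N:ℝ)-2)/(N:ℝ) * τ ^ ((N:ℝ)) + (1 - ((N:ℝ)-2)/(N:ℝ)))
          = ((N:ℝ)-2) * τ ^ ((N:ℝ)) + 2 := by
        field_simp
        ring
      rwa [e] at h
    -- AM-GM 2:  τ^N < (N/(N+α)) * τ^(N+α) + α/(N+α)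
    have key2 : τ ^ ((N:ℝ)) < (N:ℝ)/((N:ℝ)+α) * τ ^ ((N:ℝ)+α) + (1 - (N:ℝ)/((N:ℝ)+α)) := by
      have hθ0 : (0:ℝ) < (N:ℝ)/((N:ℝ)+α) := by
        apply div_pos <;> linarith
      have hθ1 : (N:ℝ)/((N:ℝ)+α) < 1 := by
        rw [div_lt_one hNα]; linarith
      have h := stmt14_key hτNα.le hyne hθ0 hθ1
      have heq : (τ ^ ((N:ℝ)+α)) ^ ((N:ℝ)/((N:ℝ)+α)) = τ ^ ((N:ℝ)) := by
        rw [← Real.rpow_mul hτ]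
        congr 1
        field_simp
      rwa [heq] at h
    have key2' : ((N:ℝ)+α) * τ ^ ((N:ℝ)) < (N:ℝ) * τ ^ ((N:ℝ)+α) + α := by
      have h := mul_lt_mul_of_pos_left key2 hNα
      have e : ((N:ℝ)+α) * ((N:ℝ)/((N:ℝ)+α) * τ ^ ((N:ℝ)+α) + (1 - (N:ℝ)/((N:ℝ)+α)))
          = (N:ℝ) * τ ^ ((N:ℝ)+α) + α := by
        field_simp
        ring
      rwa [e] at h
    rw [hform τ hτ, h1]
    have hf : τ ^ ((N:ℝ) - 2) / 2 - ((N:ℝ) - 2) * τ ^ (N:ℝ) / (2 * N)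
        < 1/2 - ((N:ℝ)-2)/(2*N) := by
      have lhs_eq : τ ^ ((N:ℝ) - 2) / 2 - ((N:ℝ) - 2) * τ ^ (N:ℝ) / (2 * N)
          = ((N:ℝ) * τ ^ ((N:ℝ) - 2) - ((N:ℝ)-2) * τ ^ ((N:ℝ))) / (2 * N) := by
        field_simp
      have rhs_eq : (1:ℝ)/2 - ((N:ℝ)-2)/(2*N) = 2 / (2 * (N:ℝ)) := by
        field_simp
        ring
      rw [lhs_eq, rhs_eq]
      apply (div_lt_div_iff_of_pos_right (by positivity)).mpr
      linarith
    have hg : τ ^ (N:ℝ) / 2 - (N:ℝ) * τ ^ ((N:ℝ) + α) / (2 * ((N:ℝ) + α))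
        < 1/2 - (N:ℝ)/(2*((N:ℝ)+α)) := by
      have lhs_eq : τ ^ (N:ℝ) / 2 - (N:ℝ) * τ ^ ((N:ℝ) + α) / (2 * ((N:ℝ) + α))
          = (((N:ℝ)+α) * τ ^ ((N:ℝ)) - (N:ℝ) * τ ^ ((N:ℝ)+α)) / (2 * ((N:ℝ)+α)) := by
        field_simp
      have rhs_eq : (1:ℝ)/2 - (N:ℝ)/(2*((N:ℝ)+α)) = α / (2 * ((N:ℝ)+α)) := by
        field_simp
        ring
      rw [lhs_eq, rhs_eq]
      apply (div_lt_div_iff_of_pos_right (by positivity)).mpr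
      linarith
    exact add_lt_add (mul_lt_mul_of_pos_right hf ha) (mul_lt_mul_of_pos_right hg hc)
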